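/- For α > 1 and R > 0, the optimal quantization error under Rényi-α-entropy constraint R is bounded above by the mass-constrained optimal error at level ((α-1)/α)R: D^α_{μ,ρ}(R) ≤ D^∞_{μ,ρ}(((α-1)/α)·R). -/

import Mathlib

open MeasureTheory Filter Set
open scoped ENNReal NNReal Classical

variable {E : Type*} [NormedAddCommGroup E] [NormedSpace ℝ E] [CompleteSpace E]
  [MeasurableSpace E] [BorelSpace E] [SecondCountableTopology E]

/-- A centered Gaussian measure: every continuous linear functional has a centered
Gaussian distribution under `μ`. -/
def IsCenteredGaussian (μ : Measure E) : Prop :=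
  ∀ L : E →L[ℝ] ℝ, ∃ v : NNReal, μ.map L = ProbabilityTheory.gaussianReal 0 v

/-- A quantizer: a Borel measurable map with countable image. -/
def IsQuantizer (f : E → E) : Prop := Measurable f ∧ (Set.range f).Countable

/-- Mass of the codecell of the codepoint `z`. -/
noncomputable def cellMass (μ : Measure E) (f : E → E) (z : E) : ℝ := (μ (f ⁻¹' {z})).toReal

/-- The Rényi-`α`-entropy of a quantizer `f` w.r.t. `μ`, for `α ∈ [0,∞]`
(with value `∞` allowed). -/
noncomputable def renyiEntropy (μ : Measure E) (f : E → E) (α : ℝ≥0∞) : ℝ≥0∞ :=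
  if α = ⊤ then ENNReal.ofReal (-Real.log (⨆ z : Set.range f, cellMass μ f ↑z))
  else if α = 0 then
    (if h : {z | z ∈ Set.range f ∧ μ (f ⁻¹' {z}) ≠ 0}.Finite
      then ENNReal.ofReal (Real.log h.toFinset.card) else ⊤)
  else if α = 1 then
    ∑' z : Set.range f, ENNReal.ofReal (-(cellMass μ f ↑z * Real.log (cellMass μ f ↑z)))
  else if (∑' z : Set.range f, ENNReal.ofReal (cellMass μ f ↑z ^ α.toReal)) = ⊤ then ⊤
  else ENNReal.ofReal ((1 / (1 - α.toReal)) *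
    Real.log (∑' z : Set.range f, ENNReal.ofReal (cellMass μ f ↑z ^ α.toReal)).toReal)

/-- The quantization error of `f` for the distance function `ρ`. -/
noncomputable def quantError (μ : Measure E) (ρ : ℝ → ℝ) (f : E → E) : ℝ :=
  ∫ x, ρ ‖x - f x‖ ∂μ

/-- The optimal quantization error under Rényi-`α`-entropy bound `R`. -/
noncomputable def optError (μ : Measure E) (ρ : ℝ → ℝ) (α : ℝ≥0∞) (R : ℝ) : ℝ :=
  sInf {d | ∃ f : E → E, IsQuantizer f ∧ renyiEntropy μ f α ≤ ENNReal.ofReal R ∧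
    d = quantError μ ρ f}

set_option linter.unusedSectionVars false

lemma cell_sum (μ : Measure E) [IsProbabilityMeasure μ] {f : E → E} (hf : IsQuantizer f) :
    ∑' z : Set.range f, μ (f ⁻¹' {(z : E)}) = 1 := by
  have hcount : Countable (Set.range f) := hf.2.to_subtype
  rw [← measure_iUnion (fun z₁ z₂ h => Set.disjoint_left.mpr (fun x hx1 hx2 => h (Subtype.ext (hx1.symm.trans hx2)))) (fun z => hf.1 (measurableSet_singleton _))]
  have : (⋃ z : Set.range f, f ⁻¹' {(z : E)}) = Set.univ := by
    ext x
    simp only [Set.mem_iUnion, Set.mem_preimage, Set.mem_singleton_iff, Set.mem_univ, iff_true]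
    exact ⟨⟨f x, Set.mem_range_self x⟩, rfl⟩
  rw [this, measure_univ]

lemma cellMass_nonneg (μ : Measure E) (f : E → E) (z : E) : 0 ≤ cellMass μ f z :=
  ENNReal.toReal_nonneg

lemma cellMass_le_one (μ : Measure E) [IsProbabilityMeasure μ] (f : E → E) (z : E) :
    cellMass μ f z ≤ 1 := by
  have h := prob_le_one (μ := μ) (s := f ⁻¹' {z})
  simpa [cellMass] using ENNReal.toReal_mono (by simp) h

lemma entropy_transfer (μ : Measure E) [IsProbabilityMeasure μ] {f : E → E}
    (hf : IsQuantizer f) {α R : ℝ} (hα : 1 < α) (hR : 0 < R)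
    (hinf : renyiEntropy μ f ⊤ ≤ ENNReal.ofReal ((α - 1) / α * R)) :
    renyiEntropy μ f (ENNReal.ofReal α) ≤ ENNReal.ofReal R := by
  have hα0 : (0:ℝ) < α := lt_trans one_pos hα
  set R' : ℝ := (α - 1) / α * R with hR'def
  have hR' : 0 < R' := mul_pos (div_pos (sub_pos.mpr hα) hα0) hR
  have hNE : Nonempty (Set.range f) := ⟨⟨f 0, Set.mem_range_self 0⟩⟩
  set M : ℝ := ⨆ z : Set.range f, cellMass μ f ↑z with hMdef
  have hbdd : BddAbove (Set.range fun z : Set.range f => cellMass μ f ↑z) := by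
    refine ⟨1, ?_⟩
    rintro _ ⟨z, rfl⟩
    exact cellMass_le_one μ f z
  -- M > 0
  have hsum := cell_sum μ hf
  have hz0 : ∃ z : Set.range f, μ (f ⁻¹' {(z : E)}) ≠ 0 := by
    by_contra h
    push_neg at h
    rw [ENNReal.tsum_eq_zero.mpr h] at hsum
    exact zero_ne_one hsum
  obtain ⟨z0, hz0⟩ := hz0
  have hMpos : 0 < M := by
    have h1 : 0 < cellMass μ f ↑z0 :=
      ENNReal.toReal_pos hz0 (measure_ne_top μ _)
    exact lt_of_lt_of_le h1 (le_ciSup hbdd z0)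
  -- from the ∞-entropy bound : exp (-R') ≤ M
  have hinf' : -Real.log M ≤ R' := by
    simp only [renyiEntropy, if_pos rfl] at hinf
    exact (ENNReal.ofReal_le_ofReal_iff hR'.le).mp hinf
  have hexpM : Real.exp (-R') ≤ M := by
    have : Real.exp (-R') ≤ Real.exp (Real.log M) :=
      Real.exp_le_exp.mpr (by linarith)
    rwa [Real.exp_log hMpos] at this
  -- the sum S
  have htα : (ENNReal.ofReal α).toReal = α := ENNReal.toReal_ofReal hα0.le
  set S : ℝ≥0∞ := ∑' z : Set.range f, ENNReal.ofReal (cellMass μ f ↑z ^ α) with hSdef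
  have hS_le_one : S ≤ 1 := by
    calc S ≤ ∑' z : Set.range f, ENNReal.ofReal (cellMass μ f ↑z) := by
            refine ENNReal.tsum_le_tsum fun z => ENNReal.ofReal_le_ofReal ?_
            rcases eq_or_lt_of_le (cellMass_nonneg μ f ↑z) with h0 | h0
            · rw [← h0, Real.zero_rpow (ne_of_gt hα0)]
            · calc cellMass μ f ↑z ^ α ≤ cellMass μ f ↑z ^ (1:ℝ) :=
                    Real.rpow_le_rpow_of_exponent_ge h0 (cellMass_le_one μ f ↑z) hα.le
                _ = cellMass μ f ↑z := Real.rpow_one _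
      _ = ∑' z : Set.range f, μ (f ⁻¹' {(z : E)}) := by
            refine tsum_congr fun z => ?_
            exact ENNReal.ofReal_toReal (measure_ne_top μ _)
      _ = 1 := hsum
  have hS_ne_top : S ≠ ⊤ := ne_top_of_le_ne_top ENNReal.one_ne_top hS_le_one
  -- key lower bound on S
  have hkey : Real.exp ((1 - α) * R) ≤ S.toReal := by
    have hEq : Real.exp ((1 - α) * R) = Real.exp (-R') ^ α := by
      rw [Real.rpow_def_of_pos (Real.exp_pos _), Real.log_exp]
      congr 1
      field_simp [hR'def]
      have h' : α * R' = (α - 1) * R := by rw [hR'def]; field_simp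
      linarith
    rw [hEq]
    refine le_of_forall_lt fun c hc => ?_
    rcases lt_or_ge c 0 with hc0 | hc0
    · exact lt_of_lt_of_le hc0 ENNReal.toReal_nonneg
    · set t : ℝ := c ^ α⁻¹ with htdef
      have ht0 : 0 ≤ t := Real.rpow_nonneg hc0 _
      have htα' : t ^ α = c := Real.rpow_inv_rpow hc0 (ne_of_gt hα0)
      have ht_lt_exp : t < Real.exp (-R') := by
        by_contra h
        push_neg at h
        have : Real.exp (-R') ^ α ≤ t ^ α :=
          Real.rpow_le_rpow (Real.exp_pos _).le h hα0.le
        rw [htα'] at this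
        exact absurd hc (not_lt.mpr this)
      have ht_lt_M : t < M := lt_of_lt_of_le ht_lt_exp hexpM
      obtain ⟨z, hz⟩ := (lt_ciSup_iff hbdd).mp ht_lt_M
      have h1 : c < cellMass μ f ↑z ^ α := by
        rw [← htα']
        exact Real.rpow_lt_rpow ht0 hz hα0
      have h2 : cellMass μ f ↑z ^ α ≤ S.toReal := by
        have h3 : ENNReal.ofReal (cellMass μ f ↑z ^ α) ≤ S := ENNReal.le_tsum z
        calc cellMass μ f ↑z ^ α
            = (ENNReal.ofReal (cellMass μ f ↑z ^ α)).toReal :=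
              (ENNReal.toReal_ofReal (Real.rpow_nonneg (cellMass_nonneg μ f ↑z) _)).symm
          _ ≤ S.toReal := ENNReal.toReal_mono hS_ne_top h3
      exact lt_of_lt_of_le h1 h2
  -- now compute the entropy
  have hne_top : ENNReal.ofReal α ≠ ⊤ := ENNReal.ofReal_ne_top
  have hne_zero : ENNReal.ofReal α ≠ 0 := by
    simp [ENNReal.ofReal_eq_zero, not_le, hα0]
  have hne_one : ENNReal.ofReal α ≠ 1 := by
    intro h
    have h2 := congrArg ENNReal.toReal h
    rw [htα, ENNReal.toReal_one] at h2
    exact ne_of_gt hα h2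
  rw [renyiEntropy, if_neg hne_top, if_neg hne_zero, if_neg hne_one, htα,
    if_neg (by rw [← hSdef]; exact hS_ne_top), ← hSdef]
  refine ENNReal.ofReal_le_ofReal ?_
  have hlog : (1 - α) * R ≤ Real.log S.toReal := by
    have := Real.log_le_log (Real.exp_pos _) hkey
    rwa [Real.log_exp] at this
  have hc : (1 : ℝ) / (1 - α) ≤ 0 := by
    apply div_nonpos_of_nonneg_of_nonpos one_pos.le
    linarith
  have := mul_le_mul_of_nonpos_left hlog hc
  calc 1 / (1 - α) * Real.log S.toReal ≤ 1 / (1 - α) * ((1 - α) * R) := this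
    _ = R := by
        have h1α : (1:ℝ) - α ≠ 0 := by linarith
        field_simp

lemma const_entropy_top (μ : Measure E) [IsProbabilityMeasure μ] :
    renyiEntropy μ (fun _ : E => (0:E)) ⊤ = 0 := by
  have hcell : ∀ z : Set.range (fun _ : E => (0:E)), cellMass μ (fun _ => 0) ↑z = 1 := by
    rintro ⟨z, x, hx⟩
    have hz : z = 0 := hx.symm
    subst hz
    have : (fun _ : E => (0:E)) ⁻¹' {0} = Set.univ := by
      ext y; simp
    simp [cellMass, this]
  have hNE : Nonempty (Set.range (fun _ : E => (0:E))) := ⟨⟨0, 0, rfl⟩⟩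
  have hsup : (⨆ z : Set.range (fun _ : E => (0:E)), cellMass μ (fun _ => 0) ↑z) = 1 := by
    rw [iSup_congr hcell]
    exact ciSup_const
  simp [renyiEntropy, hsup]

/-- For `α > 1` and `R > 0`, the optimal quantization error under Rényi-α-entropy bound
`R` is at most the mass-constrained optimal error at level `((α-1)/α)R`. -/
theorem stmt_8 (μ : Measure E) [IsProbabilityMeasure μ] (hμ : IsCenteredGaussian μ)
    [NullSingletonClass μ] [μ.IsOpenPosMeasure] (hdim : ¬ FiniteDimensional ℝ E)
    (ρ : ℝ → ℝ) (hρ0 : ρ 0 = 0) (hρmono : StrictMonoOn ρ (Set.Ici 0))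
    (hρcont : ContinuousOn ρ (Set.Ici 0)) (hρsurj : Set.SurjOn ρ (Set.Ici 0) (Set.Ici 0))
    (hρmaps : Set.MapsTo ρ (Set.Ici 0) (Set.Ici 0))
    (hρint : Integrable (fun x => ρ ‖x‖) μ)
    (α : ℝ) (hα : 1 < α) (R : ℝ) (hR : 0 < R) :
    optError μ ρ (ENNReal.ofReal α) R ≤ optError μ ρ ⊤ ((α - 1) / α * R) := by
  apply csInf_le_csInf
  · refine ⟨0, ?_⟩
    rintro d ⟨f, hf, -, rfl⟩
    exact integral_nonneg fun x => hρmaps (Set.mem_Ici.mpr (norm_nonneg _))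
  · refine ⟨quantError μ ρ (fun _ => (0:E)), (fun _ => 0), ⟨measurable_const, ?_⟩, ?_, rfl⟩
    · rw [Set.range_const]
      exact Set.countable_singleton 0
    · rw [const_entropy_top μ]
      exact zero_le
  · rintro d ⟨f, hf, hent, rfl⟩
    exact ⟨f, hf, entropy_transfer μ hf hα hR hent, rfl⟩
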